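/- For every permutation w ∈ S_n, the transpose map P ↦ Pᵀ is a poset anti-isomorphism from the chute move poset PD(w) to the chute move poset PD(w⁻¹). -/

import Mathlib

open Classical

noncomputable section

/-- 1-based value of a permutation of `Fin n` at a 1-based position `j`. -/
def permVal {n : ℕ} (w : Equiv.Perm (Fin n)) (j : ℕ) : ℕ :=
  if h : 1 ≤ j ∧ j ≤ n then (w ⟨j - 1, by omega⟩ : ℕ) + 1 else 0

/-- `(i,j)` is an inversion of `w`: `1 ≤ i < j ≤ n` and the (1-based) position of the
value `j` in the one-line notation of `w` precedes that of `i`. -/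
def IsInv {n : ℕ} (w : Equiv.Perm (Fin n)) (i j : ℕ) : Prop :=
  1 ≤ i ∧ i < j ∧ j ≤ n ∧ permVal w.symm j < permVal w.symm i

/-- Lehmer form entry at box `(i,j)`: the number of `k ∈ [1, T(i,j)-1]` that do not
appear below box `(i,j)` in column `j`. -/
def lehmer (T : ℕ → ℕ → ℕ) (i j : ℕ) : ℕ :=
  ((Finset.Ico 1 (T i j)).filter fun k => ∀ i', 1 ≤ i' → i' < i → T i' j ≠ k).card

/-- Incrementing box `(i,j)` of `T` yields `T'`:  with `a = T(i,j)` and `b` the smallest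
integer greater than `a` not appearing below `(i,j)` in column `j`, either a pure
increment (if `b` is absent from column `j`) or a trade increment (swap `a` and `b`). -/
def IncrementAt (T T' : ℕ → ℕ → ℕ) (i j : ℕ) : Prop :=
  ∃ b, T i j < b ∧
    (∀ k, T i j < k → k < b → ∃ i', 1 ≤ i' ∧ i' < i ∧ T i' j = k) ∧
    (∀ i', 1 ≤ i' → i' < i → T i' j ≠ b) ∧
    (((∀ i', 1 ≤ i' → T i' j ≠ b) ∧
        T' = fun a c => if a = i ∧ c = j then b else T a c) ∨
      (∃ i'', i < i'' ∧ T i'' j = b ∧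
        T' = fun a c =>
          if a = i ∧ c = j then b else if a = i'' ∧ c = j then T i j else T a c))

/-- `IncBy M T T'`: `T'` is obtained from `T` by incrementing each box of the
multiset `M` (with multiplicity). -/
inductive IncBy : Multiset (ℕ × ℕ) → (ℕ → ℕ → ℕ) → (ℕ → ℕ → ℕ) → Prop
  | nil (T : ℕ → ℕ → ℕ) : IncBy 0 T T
  | cons {M : Multiset (ℕ × ℕ)} {T T' T'' : ℕ → ℕ → ℕ} {i j : ℕ} :
      IncrementAt T T' i j → IncBy M T' T'' → IncBy ((i, j) ::ₘ M) T T''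

/-- Column-injective tableau for `w`: a box has a nonzero entry iff it is an inversion
of `w`, and the nonzero entries in each column are distinct. -/
def ColInj {n : ℕ} (w : Equiv.Perm (Fin n)) (T : ℕ → ℕ → ℕ) : Prop :=
  (∀ i j, T i j ≠ 0 ↔ IsInv w i j) ∧
  ∀ i i' j, 1 ≤ i → i < i' → i' < j → T i j ≠ 0 → T i' j ≠ 0 → T i j ≠ T i' j

/-- The Λ-shape `Λ(i,j,k)` is balanced in `T`. -/
def LBal (T : ℕ → ℕ → ℕ) (i j k : ℕ) : Prop :=
  min (T i j) (T j k) ≤ T i k ∧ T i k ≤ max (T i j) (T j k)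

/-- Every Λ-shape of `Δ_{n-1}` is balanced in `T`. -/
def BalancedTab (n : ℕ) (T : ℕ → ℕ → ℕ) : Prop :=
  ∀ i j k, 1 ≤ i → i < j → j < k → k ≤ n → LBal T i j k

/-- Inversions tableau for `w`: balanced column-injective tableau whose entries in
row `i` are at most `i`. -/
def InvTab {n : ℕ} (w : Equiv.Perm (Fin n)) (T : ℕ → ℕ → ℕ) : Prop :=
  ColInj w T ∧ BalancedTab n T ∧ ∀ i j, T i j ≤ i

/-- The multiset of entries of `T` on `hook(i,k)`. -/
def hookEntries (T : ℕ → ℕ → ℕ) (i k : ℕ) : Multiset ℕ :=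
  (T i k ::ₘ (Finset.Ioo i k).val.map fun r => T r k) +
    (Finset.Ioo i k).val.map fun c => T i c

/-- The median ((k-i)-th smallest of the `2(k-i)-1` entries) of the hook of `(i,k)`. -/
def hookMedian (T : ℕ → ℕ → ℕ) (i k : ℕ) : ℕ :=
  ((hookEntries T i k).sort (· ≤ ·)).getD (k - i - 1) 0

/-! ## Pipe dreams

A pipe dream in the staircase `Δ_n` is encoded by `P : ℕ → ℕ → Bool`, where
`P i j = true` means box `(i,j)` (row `i` from the top, column `j` from the left,
with `1 ≤ i, j` and `i + j ≤ n`) is a cross tile, and `false` means a bump tile;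
boxes on the southeast boundary (`i + j = n + 1`) are elbow tiles. -/

/-- `labels n P i j` is the pair (label of the north edge, label of the east edge) of
the pipes passing through box `(i,j)`:  pipes enter at row `k` on the west side with
label `k` and propagate through cross, bump and elbow tiles. -/
def labels (n : ℕ) (P : ℕ → ℕ → Bool) (i j : ℕ) : ℕ × ℕ :=
  let west := if _h1 : j ≤ 1 then i else (labels n P i (j - 1)).2
  if _h : i + j ≤ n then
    if P i j then ((labels n P (i + 1) j).1, west)
    else (west, (labels n P (i + 1) j).1)
  else (west, west)
termination_by (n + 1 - i) + j
decreasing_by all_goals omega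

def northLabel (n : ℕ) (P : ℕ → ℕ → Bool) (i j : ℕ) : ℕ := (labels n P i j).1

def westLabel (n : ℕ) (P : ℕ → ℕ → Bool) (i j : ℕ) : ℕ :=
  if j ≤ 1 then i else (labels n P i (j - 1)).2

def southLabel (n : ℕ) (P : ℕ → ℕ → Bool) (i j : ℕ) : ℕ := (labels n P (i + 1) j).1

/-- Pipes `p` and `q` cross at box `(i,j)` of `P`. -/
def CrossAt (n : ℕ) (P : ℕ → ℕ → Bool) (i j p q : ℕ) : Prop :=
  1 ≤ i ∧ 1 ≤ j ∧ i + j ≤ n ∧ P i j = true ∧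
    ((westLabel n P i j = p ∧ southLabel n P i j = q) ∨
      (westLabel n P i j = q ∧ southLabel n P i j = p))

/-- `P` is a pipe dream for `w`: crosses lie in the staircase, and reading the pipe
labels along the north side gives the one-line notation of `w`. -/
def IsPD {n : ℕ} (w : Equiv.Perm (Fin n)) (P : ℕ → ℕ → Bool) : Prop :=
  (∀ i j, P i j = true → 1 ≤ i ∧ 1 ≤ j ∧ i + j ≤ n) ∧
    ∀ j, 1 ≤ j → j ≤ n → northLabel n P 1 j = permVal w j

/-- `P` is reduced: no two pipes cross more than once. -/
def Reduced (n : ℕ) (P : ℕ → ℕ → Bool) : Prop :=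
  ∀ p q i j i' j', CrossAt n P i j p q → CrossAt n P i' j' p q → i = i' ∧ j = j'

/-- The set of reduced pipe dreams for `w`. -/
def RPD {n : ℕ} (w : Equiv.Perm (Fin n)) :=
  { P : ℕ → ℕ → Bool // IsPD w P ∧ Reduced n P }

/-- `R` is a rectangle (rows `a < b`, columns `c < d`) in which a chute move of `P`
can take place: `NW(R)=(a,c)` and `SW(R)=(b,c)` are bumps, `SE(R)=(b,d)` is a bump or
elbow, and all other boxes of `R` are crosses. -/
def IsChuteRect (n : ℕ) (P : ℕ → ℕ → Bool) (a b c d : ℕ) : Prop :=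
  1 ≤ a ∧ a < b ∧ 1 ≤ c ∧ c < d ∧ b + d ≤ n + 1 ∧
    P a c = false ∧ P b c = false ∧ P b d = false ∧
    ∀ i j, a ≤ i → i ≤ b → c ≤ j → j ≤ d →
      ¬(i = a ∧ j = c) → ¬(i = b ∧ j = c) → ¬(i = b ∧ j = d) → P i j = true

/-- The result of the chute move in the rectangle with corners `(a,c)`, `(b,d)`:
the bump at `SW=(b,c)` becomes a cross and the cross at `NE=(a,d)` becomes a bump. -/
def chuteResult (P : ℕ → ℕ → Bool) (a b c d : ℕ) : ℕ → ℕ → Bool :=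
  fun i j => if i = b ∧ j = c then true else if i = a ∧ j = d then false else P i j

/-- `P'` is obtained from `P` by a single chute move. -/
def ChuteStep (n : ℕ) (P P' : ℕ → ℕ → Bool) : Prop :=
  ∃ a b c d, IsChuteRect n P a b c d ∧ P' = chuteResult P a b c d

/-- The chute move order on `RPD w`: `P ≤ Q` iff `Q` is obtained from `P`
by a sequence of chute moves. -/
def chuteLE {n : ℕ} (w : Equiv.Perm (Fin n)) (P Q : RPD w) : Prop :=
  Relation.ReflTransGen (fun X Y : RPD w => ChuteStep n X.1 Y.1) P Q

/-- `theta n P p q` is the index of the row in which pipes `p` and `q` cross in `P`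
(`0` if they do not cross).  For `P ∈ PD(w)` reduced, `theta n P` is the inversions
tableau `Θ(P)`. -/
def theta (n : ℕ) (P : ℕ → ℕ → Bool) (p q : ℕ) : ℕ :=
  if h : ∃ rc : ℕ × ℕ, CrossAt n P rc.1 rc.2 p q then (Classical.choose h).1 else 0

/-- The Lehmer tableau `Φ(P) = Λ(Θ(P))` of a pipe dream. -/
def phi (n : ℕ) (P : ℕ → ℕ → Bool) (i j : ℕ) : ℕ := lehmer (theta n P) i j

/-- Cover relation of the chute move order. -/
def chuteCovBy {n : ℕ} (w : Equiv.Perm (Fin n)) (P Q : RPD w) : Prop :=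
  chuteLE w P Q ∧ P ≠ Q ∧ ∀ R, chuteLE w P R → chuteLE w R Q → R = P ∨ R = Q

/-- The interval `[P, Q]` in the chute move order. -/
def chuteIcc {n : ℕ} (w : Equiv.Perm (Fin n)) (P Q : RPD w) : Set (RPD w) :=
  { R | chuteLE w P R ∧ chuteLE w R Q }

/-- A chain in the chute move order. -/
def chuteChain {n : ℕ} (w : Equiv.Perm (Fin n)) (C : Set (RPD w)) : Prop :=
  ∀ x ∈ C, ∀ y ∈ C, chuteLE w x y ∨ chuteLE w y x

/-- `[P,Q]` is a polygon: an interval of cardinality at least 4 that is the union of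
two chains whose intersection is `{P, Q}`. -/
def IsPolygon {n : ℕ} (w : Equiv.Perm (Fin n)) (P Q : RPD w) : Prop :=
  chuteLE w P Q ∧ 4 ≤ (chuteIcc w P Q).ncard ∧
    ∃ C₁ C₂ : Set (RPD w), chuteChain w C₁ ∧ chuteChain w C₂ ∧
      C₁ ∪ C₂ = chuteIcc w P Q ∧ C₁ ∩ C₂ = {P, Q}

/-- `m` is the meet (greatest lower bound) of `P` and `Q` in the chute move order. -/
def IsMeetOf {n : ℕ} (w : Equiv.Perm (Fin n)) (m P Q : RPD w) : Prop :=
  chuteLE w m P ∧ chuteLE w m Q ∧ ∀ r, chuteLE w r P → chuteLE w r Q → chuteLE w r m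

/-- `s` is the join (least upper bound) of `P` and `Q` in the chute move order. -/
def IsJoinOf {n : ℕ} (w : Equiv.Perm (Fin n)) (s P Q : RPD w) : Prop :=
  chuteLE w P s ∧ chuteLE w Q s ∧ ∀ r, chuteLE w P r → chuteLE w Q r → chuteLE w s r


/-! ## Auxiliary development for the transpose anti-isomorphism -/

mutual
/-- exit column of the pipe entering box `(i,j)` from the west -/
def exA (n : ℕ) (P : ℕ → ℕ → Bool) (i j : ℕ) : ℕ :=
  if i + j ≤ n ∧ P i j = true then exA n P i (j+1) else exB n P (i-1) j
termination_by 2*i + 2*(n+1-j) + 1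
decreasing_by all_goals omega

/-- exit column of the pipe entering box `(i,j)` from the south -/
def exB (n : ℕ) (P : ℕ → ℕ → Bool) (i j : ℕ) : ℕ :=
  if i = 0 then j else
  if i + j ≤ n ∧ ¬ P i j = true then exA n P i (j+1) else exB n P (i-1) j
termination_by 2*i + 2*(n+1-j)
decreasing_by all_goals omega
end

lemma labels_eq (n : ℕ) (P : ℕ → ℕ → Bool) (i j : ℕ) :
    labels n P i j =
      if i + j ≤ n then
        (if P i j then ((labels n P (i+1) j).1, if j ≤ 1 then i else (labels n P i (j-1)).2)
         else ((if j ≤ 1 then i else (labels n P i (j-1)).2), (labels n P (i+1) j).1))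
      else ((if j ≤ 1 then i else (labels n P i (j-1)).2),
        (if j ≤ 1 then i else (labels n P i (j-1)).2)) := by
  rw [labels]; simp only [dite_eq_ite]

lemma exA_eq (n : ℕ) (P : ℕ → ℕ → Bool) (i j : ℕ) :
    exA n P i j = if i + j ≤ n ∧ P i j = true then exA n P i (j+1) else exB n P (i-1) j := by
  rw [exA]

lemma exB_eq (n : ℕ) (P : ℕ → ℕ → Bool) (i j : ℕ) :
    exB n P i j = if i = 0 then j else
      if i + j ≤ n ∧ ¬ P i j = true then exA n P i (j+1) else exB n P (i-1) j := by
  rw [exB]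

lemma labels_transpose (n : ℕ) (P : ℕ → ℕ → Bool) (i j : ℕ) (hj : 1 ≤ j) :
    labels n (fun a b => P b a) i j = (exA n P j i, exB n P j i) := by
  have hwest : (if j ≤ 1 then i else (labels n (fun a b => P b a) i (j-1)).2)
      = exB n P (j-1) i := by
    by_cases h1 : j ≤ 1
    · have hj1 : j = 1 := by omega
      subst hj1
      rw [if_pos (le_refl 1), exB_eq]
      simp
    · rw [if_neg h1, labels_transpose n P i (j-1) (by omega)]
  rw [labels_eq, hwest]
  by_cases hn : i + j ≤ n
  · rw [if_pos hn]
    by_cases hP : P j i = true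
    · simp only [hP, if_pos]
      rw [labels_transpose n P (i+1) j hj]
      have e1 : exA n P j i = exA n P j (i+1) := by
        rw [exA_eq]; rw [if_pos ⟨by omega, hP⟩]
      have e2 : exB n P j i = exB n P (j-1) i := by
        rw [exB_eq, if_neg (by omega : ¬ j = 0), if_neg (by simp [hP])]
      rw [e1, e2]
    · simp only [hP, Bool.false_eq_true, if_false]
      rw [labels_transpose n P (i+1) j hj]
      have e1 : exA n P j i = exB n P (j-1) i := by
        rw [exA_eq, if_neg (by simp [hP])]
      have e2 : exB n P j i = exA n P j (i+1) := by
        rw [exB_eq, if_neg (by omega : ¬ j = 0), if_pos ⟨by omega, by simp [hP]⟩]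
      rw [e1, e2]
  · rw [if_neg hn]
    have e1 : exA n P j i = exB n P (j-1) i := by
      rw [exA_eq, if_neg (by rintro ⟨h, _⟩; omega)]
    have e2 : exB n P j i = exB n P (j-1) i := by
      rw [exB_eq, if_neg (by omega : ¬ j = 0), if_neg (by rintro ⟨h, _⟩; omega)]
    rw [e1, e2]
termination_by (n + 1 - i) + j
decreasing_by all_goals omega

lemma labels_bounds (n : ℕ) (P : ℕ → ℕ → Bool) (i j : ℕ) (hi : 1 ≤ i) (hj : 1 ≤ j)
    (hn : i + j ≤ n + 1) :
    (1 ≤ (labels n P i j).1 ∧ (labels n P i j).1 ≤ n) ∧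
      (i + j ≤ n → 1 ≤ (labels n P i j).2 ∧ (labels n P i j).2 ≤ n) := by
  have hwest : 1 ≤ (if j ≤ 1 then i else (labels n P i (j-1)).2) ∧
      (if j ≤ 1 then i else (labels n P i (j-1)).2) ≤ n := by
    by_cases h1 : j ≤ 1
    · rw [if_pos h1]; omega
    · rw [if_neg h1]
      exact (labels_bounds n P i (j-1) hi (by omega) (by omega)).2 (by omega)
  rw [labels_eq]
  by_cases hn' : i + j ≤ n
  · rw [if_pos hn']
    have hS := (labels_bounds n P (i+1) j (by omega) hj (by omega)).1
    by_cases hP : P i j <;> simp [hP] <;> omega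
  · rw [if_neg hn']
    simp only
    exact ⟨hwest, fun h => absurd h hn'⟩
termination_by (n + 1 - i) + j
decreasing_by all_goals omega

mutual
theorem exit_west (n : ℕ) (P : ℕ → ℕ → Bool) (i j : ℕ) (hi : 1 ≤ i) (hj : 1 ≤ j)
    (h : i + j ≤ n + 1) : exA n P (westLabel n P i j) 1 = exA n P i j := by
  by_cases h1 : j ≤ 1
  · have : j = 1 := by omega
    subst this
    rw [westLabel, if_pos (le_refl 1)]
  · rw [westLabel, if_neg h1]
    have hj' : 1 ≤ j - 1 := by omega
    have hn' : i + (j-1) ≤ n := by omega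
    rw [labels_eq, if_pos hn']
    by_cases hP : P i (j-1) = true
    · rw [if_pos hP]
      simp only
      rw [show (if j - 1 ≤ 1 then i else (labels n P i (j - 1 - 1)).2) = westLabel n P i (j-1) from
        rfl]
      rw [exit_west n P i (j-1) hi hj' (by omega)]
      rw [exA_eq n P i (j-1), if_pos ⟨hn', hP⟩]
      congr 1; omega
    · rw [if_neg hP]
      simp only
      rw [show (labels n P (i+1) (j-1)).1 = northLabel n P (i+1) (j-1) from rfl]
      rw [exit_north n P (i+1) (j-1) (by omega) hj' (by omega)]
      rw [show i + 1 - 1 = i from by omega]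
      rw [exB_eq n P i (j-1), if_neg (by omega : ¬ i = 0),
        if_pos ⟨by omega, by simp [hP]⟩]
      congr 1; omega
termination_by 2*((n+1-i)+j)
decreasing_by all_goals omega

theorem exit_north (n : ℕ) (P : ℕ → ℕ → Bool) (i j : ℕ) (hi : 1 ≤ i) (hj : 1 ≤ j)
    (h : i + j ≤ n + 1) : exA n P (northLabel n P i j) 1 = exB n P (i-1) j := by
  rw [northLabel, labels_eq]
  by_cases hn : i + j ≤ n
  · rw [if_pos hn]
    by_cases hP : P i j = true
    · rw [if_pos hP]
      simp only
      rw [show (labels n P (i+1) j).1 = northLabel n P (i+1) j from rfl]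
      rw [exit_north n P (i+1) j (by omega) hj (by omega)]
      rw [show i + 1 - 1 = i from by omega]
      rw [exB_eq n P i j, if_neg (by omega : ¬ i = 0), if_neg (by simp [hP])]
    · rw [if_neg hP]
      simp only
      rw [show (if j ≤ 1 then i else (labels n P i (j - 1)).2) = westLabel n P i j from rfl]
      rw [exit_west n P i j hi hj h]
      rw [exA_eq n P i j, if_neg (by simp [hP]), exB_eq n P (i-1) j]
  · rw [if_neg hn]
    simp only
    rw [show (if j ≤ 1 then i else (labels n P i (j - 1)).2) = westLabel n P i j from rfl]
    rw [exit_west n P i j hi hj h]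
    rw [exA_eq n P i j, if_neg (by rintro ⟨h', _⟩; omega)]
termination_by 2*((n+1-i)+j) + 1
decreasing_by all_goals omega
end

lemma exA_one {n : ℕ} (w : Equiv.Perm (Fin n)) (P : ℕ → ℕ → Bool) (hPD : IsPD w P)
    (r : ℕ) (h1 : 1 ≤ r) (h2 : r ≤ n) : exA n P r 1 = permVal w⁻¹ r := by
  have hn : 1 ≤ n := h1.trans h2
  have hrn : r - 1 < n := by omega
  set x : Fin n := ⟨r - 1, hrn⟩ with hx
  set j : ℕ := (w⁻¹ x : ℕ) + 1 with hjdef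
  have hlt : (w⁻¹ x : ℕ) < n := (w⁻¹ x).isLt
  have hj1 : 1 ≤ j := by omega
  have hjn : j ≤ n := by omega
  have hN := hPD.2 j hj1 hjn
  have hjsub : j - 1 < n := by omega
  have hperm : permVal w j = r := by
    rw [permVal, dif_pos ⟨hj1, hjn⟩]
    have hfin : (⟨j - 1, hjsub⟩ : Fin n) = w⁻¹ x := by
      apply Fin.ext; simp [hjdef]
    rw [show (⟨j - 1, by omega⟩ : Fin n) = w⁻¹ x from hfin]
    rw [show w (w⁻¹ x) = x from w.apply_symm_apply x]
    simp [hx]; omega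
  have hexit := exit_north n P 1 j le_rfl hj1 (by omega)
  rw [hN, hperm] at hexit
  have h0 : exB n P (1 - 1) j = j := by rw [exB_eq]; simp
  rw [h0] at hexit
  rw [hexit, permVal, dif_pos ⟨h1, h2⟩]

lemma exA_inj {n : ℕ} (w : Equiv.Perm (Fin n)) (P : ℕ → ℕ → Bool) (hPD : IsPD w P)
    {r r' : ℕ} (h1 : 1 ≤ r) (h2 : r ≤ n) (h1' : 1 ≤ r') (h2' : r' ≤ n)
    (h : exA n P r 1 = exA n P r' 1) : r = r' := by
  rw [exA_one w P hPD r h1 h2, exA_one w P hPD r' h1' h2'] at h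
  rw [permVal, dif_pos ⟨h1, h2⟩, permVal, dif_pos ⟨h1', h2'⟩] at h
  have hfe : (⟨r - 1, by omega⟩ : Fin n) = (⟨r' - 1, by omega⟩ : Fin n) :=
    (w⁻¹).injective (Fin.ext (by omega))
  have := congrArg Fin.val hfe
  simp only at this
  omega

lemma isPD_transpose {n : ℕ} (w : Equiv.Perm (Fin n)) (P : ℕ → ℕ → Bool)
    (hPD : IsPD w P) : IsPD w⁻¹ (fun a b => P b a) := by
  constructor
  · intro i j hT
    obtain ⟨a, b, c⟩ := hPD.1 j i hT
    exact ⟨b, a, by omega⟩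
  · intro j hj1 hjn
    rw [northLabel, labels_transpose n P 1 j hj1]
    exact exA_one w P hPD j hj1 hjn

lemma cross_label_bounds {n : ℕ} (P : ℕ → ℕ → Bool) {u v : ℕ} (hu : 1 ≤ u) (hv : 1 ≤ v)
    (huv : u + v ≤ n) :
    (1 ≤ westLabel n P u v ∧ westLabel n P u v ≤ n) ∧
    (1 ≤ southLabel n P u v ∧ southLabel n P u v ≤ n) := by
  constructor
  · by_cases h1 : v ≤ 1
    · rw [westLabel, if_pos h1]; omega
    · rw [westLabel, if_neg h1]
      exact (labels_bounds n P u (v-1) hu (by omega) (by omega)).2 (by omega)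
  · exact (labels_bounds n P (u+1) v (by omega) hv (by omega)).1

lemma crossAt_swap {n : ℕ} {P : ℕ → ℕ → Bool} {i j p q : ℕ}
    (h : CrossAt n P i j p q) : CrossAt n P i j q p :=
  ⟨h.1, h.2.1, h.2.2.1, h.2.2.2.1, h.2.2.2.2.symm⟩

lemma crossAt_transpose {n : ℕ} (P : ℕ → ℕ → Bool) {i j p q : ℕ}
    (h : CrossAt n (fun a b => P b a) i j p q) :
    CrossAt n P j i (westLabel n P j i) (southLabel n P j i) ∧
      ((exA n P (westLabel n P j i) 1 = q ∧ exA n P (southLabel n P j i) 1 = p) ∨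
       (exA n P (westLabel n P j i) 1 = p ∧ exA n P (southLabel n P j i) 1 = q)) := by
  obtain ⟨hi, hj, hij, hP, hor⟩ := h
  have hP' : P j i = true := hP
  have hcr : CrossAt n P j i (westLabel n P j i) (southLabel n P j i) :=
    ⟨hj, hi, by omega, hP', Or.inl ⟨rfl, rfl⟩⟩
  have hWt : westLabel n (fun a b => P b a) i j = exB n P j i := by
    have h1 : westLabel n (fun a b => P b a) i j = exB n P (j-1) i := by
      by_cases hj1 : j ≤ 1
      · have : j = 1 := by omega
        subst this
        rw [westLabel, if_pos le_rfl, exB_eq]; simp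
      · rw [westLabel, if_neg hj1, labels_transpose n P i (j-1) (by omega)]
    rw [h1, exB_eq n P j i, if_neg (by omega : ¬ j = 0), if_neg (by simp [hP'])]
  have hSt : southLabel n (fun a b => P b a) i j = exA n P j i := by
    rw [southLabel, labels_transpose n P (i+1) j hj]
    exact ((exA_eq n P j i).trans (if_pos ⟨by omega, hP'⟩)).symm
  have hew : exA n P (westLabel n P j i) 1 = exA n P j i :=
    exit_west n P j i hj hi (by omega)
  have hes : exA n P (southLabel n P j i) 1 = exB n P j i := by
    have h2 := exit_north n P (j+1) i (by omega) hi (by omega)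
    rw [show j + 1 - 1 = j from by omega] at h2
    exact h2
  refine ⟨hcr, ?_⟩
  rcases hor with ⟨h1, h2⟩ | ⟨h1, h2⟩
  · exact Or.inl ⟨by rw [hew, ← hSt]; exact h2, by rw [hes, ← hWt]; exact h1⟩
  · exact Or.inr ⟨by rw [hew, ← hSt]; exact h2, by rw [hes, ← hWt]; exact h1⟩

lemma reduced_transpose {n : ℕ} (w : Equiv.Perm (Fin n)) (P : ℕ → ℕ → Bool)
    (hPD : IsPD w P) (hred : Reduced n P) : Reduced n (fun a b => P b a) := by
  intro p q i j i' j' h h'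
  have hi : 1 ≤ i := h.1
  have hj : 1 ≤ j := h.2.1
  have hij : i + j ≤ n := h.2.2.1
  have hi' : 1 ≤ i' := h'.1
  have hj' : 1 ≤ j' := h'.2.1
  have hij' : i' + j' ≤ n := h'.2.2.1
  have hb := cross_label_bounds (n := n) P hj hi (by omega)
  have hb' := cross_label_bounds (n := n) P hj' hi' (by omega)
  obtain ⟨hcr, hlab⟩ := crossAt_transpose P h
  obtain ⟨hcr', hlab'⟩ := crossAt_transpose P h'
  rcases hlab with ⟨e1, e2⟩ | ⟨e1, e2⟩ <;> rcases hlab' with ⟨e1', e2'⟩ | ⟨e1', e2'⟩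
  · have hr1 : westLabel n P j i = westLabel n P j' i' :=
      exA_inj w P hPD hb.1.1 hb.1.2 hb'.1.1 hb'.1.2 (e1.trans e1'.symm)
    have hr2 : southLabel n P j i = southLabel n P j' i' :=
      exA_inj w P hPD hb.2.1 hb.2.2 hb'.2.1 hb'.2.2 (e2.trans e2'.symm)
    rw [← hr1, ← hr2] at hcr'
    have := hred _ _ j i j' i' hcr hcr'
    exact ⟨this.2, this.1⟩
  · have hr1 : westLabel n P j i = southLabel n P j' i' :=
      exA_inj w P hPD hb.1.1 hb.1.2 hb'.2.1 hb'.2.2 (e1.trans e2'.symm)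
    have hr2 : southLabel n P j i = westLabel n P j' i' :=
      exA_inj w P hPD hb.2.1 hb.2.2 hb'.1.1 hb'.1.2 (e2.trans e1'.symm)
    have hcr'' := crossAt_swap hcr'
    rw [← hr1, ← hr2] at hcr''
    have := hred _ _ j i j' i' hcr hcr''
    exact ⟨this.2, this.1⟩
  · have hr1 : westLabel n P j i = southLabel n P j' i' :=
      exA_inj w P hPD hb.1.1 hb.1.2 hb'.2.1 hb'.2.2 (e1.trans e2'.symm)
    have hr2 : southLabel n P j i = westLabel n P j' i' :=
      exA_inj w P hPD hb.2.1 hb.2.2 hb'.1.1 hb'.1.2 (e2.trans e1'.symm)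
    have hcr'' := crossAt_swap hcr'
    rw [← hr1, ← hr2] at hcr''
    have := hred _ _ j i j' i' hcr hcr''
    exact ⟨this.2, this.1⟩
  · have hr1 : westLabel n P j i = westLabel n P j' i' :=
      exA_inj w P hPD hb.1.1 hb.1.2 hb'.1.1 hb'.1.2 (e1.trans e1'.symm)
    have hr2 : southLabel n P j i = southLabel n P j' i' :=
      exA_inj w P hPD hb.2.1 hb.2.2 hb'.2.1 hb'.2.2 (e2.trans e2'.symm)
    rw [← hr1, ← hr2] at hcr'
    have := hred _ _ j i j' i' hcr hcr'
    exact ⟨this.2, this.1⟩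

lemma transpose_mem {n : ℕ} (w : Equiv.Perm (Fin n)) (P : ℕ → ℕ → Bool)
    (h1 : IsPD w P) (h2 : Reduced n P) :
    IsPD w⁻¹ (fun a b => P b a) ∧ Reduced n (fun a b => P b a) :=
  ⟨isPD_transpose w P h1, reduced_transpose w P h1 h2⟩

lemma chuteStep_transpose {n : ℕ} {P Q : ℕ → ℕ → Bool} (h : ChuteStep n P Q) :
    ChuteStep n (fun a b => Q b a) (fun a b => P b a) := by
  obtain ⟨a, b, c, d, hrect, hQ⟩ := h
  obtain ⟨ha, hab, hc, hcd, hbd, hac, hbc, hbd', hint⟩ := hrect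
  have hPad : P a d = true := hint a d le_rfl (le_of_lt hab) (le_of_lt hcd) le_rfl
    (by rintro ⟨_, h'⟩; omega) (by rintro ⟨h', _⟩; omega) (by rintro ⟨h', _⟩; omega)
  subst hQ
  refine ⟨c, d, a, b, ⟨hc, hcd, ha, hab, by omega, ?_, ?_, ?_, ?_⟩, ?_⟩
  · show chuteResult P a b c d a c = false
    rw [chuteResult]
    rw [if_neg (by rintro ⟨h', _⟩; omega), if_neg (by rintro ⟨_, h'⟩; omega)]
    exact hac
  · show chuteResult P a b c d a d = false
    rw [chuteResult]
    rw [if_neg (by rintro ⟨_, h'⟩; omega), if_pos ⟨rfl, rfl⟩]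
  · show chuteResult P a b c d b d = false
    rw [chuteResult]
    rw [if_neg (by rintro ⟨_, h'⟩; omega), if_neg (by rintro ⟨h', _⟩; omega)]
    exact hbd'
  · intro x y hx1 hx2 hy1 hy2 hne1 hne2 hne3
    show chuteResult P a b c d y x = true
    rw [chuteResult]
    by_cases hc1 : y = b ∧ x = c
    · rw [if_pos hc1]
    · rw [if_neg hc1, if_neg (by rintro ⟨h1', h2'⟩; exact hne2 ⟨h2', h1'⟩)]
      exact hint y x hy1 hy2 hx1 hx2
        (by rintro ⟨h1', h2'⟩; exact hne1 ⟨h2', h1'⟩)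
        (by rintro ⟨h1', h2'⟩; exact hc1 ⟨h1', h2'⟩)
        (by rintro ⟨h1', h2'⟩; exact hne3 ⟨h2', h1'⟩)
  · funext x y
    symm
    show chuteResult (fun a' b' => chuteResult P a b c d b' a') c d a b x y = P y x
    rw [chuteResult]
    by_cases hc1 : x = d ∧ y = a
    · rw [if_pos hc1]
      obtain ⟨hx, hy⟩ := hc1; subst hx; subst hy
      exact hPad.symm
    · rw [if_neg hc1]
      by_cases hc2 : x = c ∧ y = b
      · rw [if_pos hc2]
        obtain ⟨hx, hy⟩ := hc2; subst hx; subst hy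
        exact hbc.symm
      · rw [if_neg hc2]
        show chuteResult P a b c d y x = P y x
        rw [chuteResult]
        rw [if_neg (by rintro ⟨h1', h2'⟩; exact hc2 ⟨h2', h1'⟩),
          if_neg (by rintro ⟨h1', h2'⟩; exact hc1 ⟨h2', h1'⟩)]

lemma chuteLE_rev {n : ℕ} (u v : Equiv.Perm (Fin n)) (f : RPD u → RPD v)
    (hf : ∀ X, (f X).1 = fun i j => X.1 j i) {X Y : RPD u} (h : chuteLE u X Y) :
    chuteLE v (f Y) (f X) := by
  induction h with
  | refl => exact Relation.ReflTransGen.refl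
  | @tail b c hXb hbc ih =>
      refine Relation.ReflTransGen.head ?_ ih
      show ChuteStep n (f c).1 (f b).1
      rw [hf, hf]
      exact chuteStep_transpose hbc

/-- the transpose map `P ↦ Pᵀ` is a poset anti-isomorphism from the
chute move poset `PD(w)` to the chute move poset `PD(w⁻¹)`. -/
theorem transpose_anti_isomorphism {n : ℕ} (w : Equiv.Perm (Fin n)) :
    ∃ t : RPD w → RPD w⁻¹, Function.Bijective t ∧
      (∀ P : RPD w, (t P).1 = fun i j => P.1 j i) ∧
      ∀ P Q : RPD w, chuteLE w P Q ↔ chuteLE w⁻¹ (t Q) (t P) := by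
  let t : RPD w → RPD w⁻¹ := fun P => ⟨fun i j => P.1 j i, transpose_mem w P.1 P.2.1 P.2.2⟩
  let s : RPD w⁻¹ → RPD w := fun Q => ⟨fun i j => Q.1 j i, by
    have := transpose_mem w⁻¹ Q.1 Q.2.1 Q.2.2
    rwa [inv_inv] at this⟩
  have hst : ∀ P, s (t P) = P := fun P => Subtype.ext rfl
  have hts : ∀ Q, t (s Q) = Q := fun Q => Subtype.ext rfl
  refine ⟨t, Function.bijective_iff_has_inverse.mpr ⟨s, hst, hts⟩, fun P => rfl, fun P Q => ?_⟩
  constructor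
  · exact chuteLE_rev w w⁻¹ t (fun _ => rfl)
  · intro h
    have hs := chuteLE_rev w⁻¹ w s (fun _ => rfl) h
    rwa [hst, hst] at hs
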